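/- If the pair of random variables (X,Y) is independent of Z, then mcf((X,Z),(Y,Z)) = (mcf(X,Y), Z); in particular J_GK((X,Z),(Y,Z)) = J_GK(X,Y) + H(Z). -/

import Mathlib

open Real Finset

/-- Probability that random variable `X` takes value `a`, under the distribution `p` on `Ω`. -/
noncomputable def pr {Ω α : Type*} [Fintype Ω] [DecidableEq α]
    (p : Ω → ℝ) (X : Ω → α) (a : α) : ℝ :=
  ∑ ω ∈ Finset.univ.filter (fun ω => X ω = a), p ω

/-- Shannon entropy (natural log) of a random variable `X` on the finite space `Ω`. -/
noncomputable def ent {Ω α : Type*} [Fintype Ω] [DecidableEq α]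
    (p : Ω → ℝ) (X : Ω → α) : ℝ :=
  ∑ a ∈ Finset.univ.image X, Real.negMulLog (pr p X a)

/-- Conditional entropy H(X | Y) = H(X,Y) - H(Y). -/
noncomputable def cent {Ω α β : Type*} [Fintype Ω] [DecidableEq α] [DecidableEq β]
    (p : Ω → ℝ) (X : Ω → α) (Y : Ω → β) : ℝ :=
  ent p (fun ω => (X ω, Y ω)) - ent p Y

/-- `p` is a probability distribution on `Ω`. -/
def IsProb {Ω : Type*} [Fintype Ω] (p : Ω → ℝ) : Prop :=
  (∀ ω, 0 ≤ p ω) ∧ ∑ ω, p ω = 1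

/-- Independence of two random variables under `p`. -/
def IndepRV {Ω α β : Type*} [Fintype Ω] [DecidableEq α] [DecidableEq β]
    (p : Ω → ℝ) (X : Ω → α) (Y : Ω → β) : Prop :=
  ∀ a b, pr p (fun ω => (X ω, Y ω)) (a, b) = pr p X a * pr p Y b

/-- `G` is a common function of `U` and `V`: H(G|U) = H(G|V) = 0. -/
def IsCF {Ω α β γ : Type*} [Fintype Ω] [DecidableEq α] [DecidableEq β] [DecidableEq γ]
    (p : Ω → ℝ) (U : Ω → α) (V : Ω → β) (G : Ω → γ) : Prop :=
  cent p G U = 0 ∧ cent p G V = 0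

/-- `G` is a maximal common function (Gács–Körner) of `U` and `V`:
a common function of maximal entropy among all common functions. -/
def IsMCF {Ω α β γ : Type*} [Fintype Ω] [DecidableEq α] [DecidableEq β] [DecidableEq γ]
    (p : Ω → ℝ) (U : Ω → α) (V : Ω → β) (G : Ω → γ) : Prop :=
  IsCF p U V G ∧ ∀ G' : Ω → ℕ, IsCF p U V G' → ent p G' ≤ ent p G
section Helpers
open Real Finset
variable {Ω α β γ δ : Type*} [Fintype Ω] [DecidableEq α] [DecidableEq β] [DecidableEq γ] [DecidableEq δ]

theorem pr_nonneg (p : Ω → ℝ) (hp : ∀ ω, 0 ≤ p ω) (X : Ω → α) (a : α) : 0 ≤ pr p X a :=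
  Finset.sum_nonneg fun ω _ => hp ω

theorem pr_eq_zero (p : Ω → ℝ) (X : Ω → α) {a : α} (ha : a ∉ Finset.univ.image X) :
    pr p X a = 0 := by
  unfold pr
  rw [Finset.sum_eq_zero]
  intro ω hω
  simp only [Finset.mem_filter] at hω
  exact absurd (Finset.mem_image.2 ⟨ω, Finset.mem_univ ω, hω.2⟩) ha

theorem sum_pr (p : Ω → ℝ) (X : Ω → α) {S : Finset α} (hS : Finset.univ.image X ⊆ S) :
    ∑ a ∈ S, pr p X a = ∑ ω, p ω := by
  unfold pr
  exact Finset.sum_fiberwise_of_maps_to (fun ω _ => hS (Finset.mem_image_of_mem X (Finset.mem_univ ω))) p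

theorem ent_eq_sum (p : Ω → ℝ) (X : Ω → α) {S : Finset α} (hS : Finset.univ.image X ⊆ S) :
    ent p X = ∑ a ∈ S, Real.negMulLog (pr p X a) := by
  unfold ent
  refine Finset.sum_subset hS fun a _ ha => ?_
  rw [pr_eq_zero p X ha, Real.negMulLog_zero]

/-- probabilities agree if the fibers agree -/
theorem pr_fiber_congr {p : Ω → ℝ} {X : Ω → α} {Y : Ω → β} {a : α} {b : β}
    (h : ∀ ω, X ω = a ↔ Y ω = b) : pr p X a = pr p Y b := by
  unfold pr
  congr 1
  ext ω
  simp [h ω]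

theorem pr_comp (p : Ω → ℝ) (W : Ω → α) (f : α → δ) {S : Finset α}
    (hS : Finset.univ.image W ⊆ S) (c : δ) :
    pr p (fun ω => f (W ω)) c = ∑ w ∈ S.filter (fun w => f w = c), pr p W w := by
  classical
  unfold pr
  rw [← Finset.sum_fiberwise_of_maps_to (g := W) (t := S.filter (fun w => f w = c))
    (s := Finset.univ.filter (fun ω => f (W ω) = c)) ?_ p]
  · refine Finset.sum_congr rfl fun w hw => ?_
    simp only [Finset.mem_filter] at hw
    congr 1
    ext ω
    simp only [Finset.mem_filter, Finset.mem_univ, true_and]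
    constructor
    · rintro ⟨h1, h2⟩; exact h2
    · intro h2; exact ⟨by rw [h2, hw.2], h2⟩
  · intro ω hω
    simp only [Finset.mem_filter, Finset.mem_univ, true_and] at hω ⊢
    exact ⟨hS (Finset.mem_image_of_mem W (Finset.mem_univ ω)), hω⟩

theorem ent_comp_inj (p : Ω → ℝ) (W : Ω → α) {f : α → δ} (hf : Function.Injective f) :
    ent p (fun ω => f (W ω)) = ent p W := by
  unfold ent
  have himg : Finset.univ.image (fun ω => f (W ω)) = (Finset.univ.image W).image f := by
    rw [Finset.image_image]; rfl
  rw [himg, Finset.sum_image (fun a _ b _ h => hf h)]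
  refine Finset.sum_congr rfl fun w _ => ?_
  congr 1
  refine pr_fiber_congr fun ω => ?_
  exact ⟨fun h => hf h, fun h => by rw [h]⟩

theorem pr_congr_ae {p : Ω → ℝ} {A A' : Ω → α} (h : ∀ ω, p ω ≠ 0 → A ω = A' ω) (a : α) :
    pr p A a = pr p A' a := by
  classical
  unfold pr
  rw [← Finset.sum_filter_ne_zero, ← Finset.sum_filter_ne_zero (s := Finset.univ.filter (fun ω => A' ω = a))]
  congr 1
  ext ω
  simp only [Finset.mem_filter, Finset.mem_univ, true_and]
  constructor
  · rintro ⟨h1, h2⟩; exact ⟨by rw [← h ω h2]; exact h1, h2⟩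
  · rintro ⟨h1, h2⟩; exact ⟨by rw [h ω h2]; exact h1, h2⟩

theorem ent_congr_ae {p : Ω → ℝ} {A A' : Ω → α} (h : ∀ ω, p ω ≠ 0 → A ω = A' ω) :
    ent p A = ent p A' := by
  rw [ent_eq_sum p A (S := Finset.univ.image A ∪ Finset.univ.image A') Finset.subset_union_left,
      ent_eq_sum p A' (S := Finset.univ.image A ∪ Finset.univ.image A') Finset.subset_union_right]
  exact Finset.sum_congr rfl fun a _ => by rw [pr_congr_ae h a]

end Helpers
section Helpers2
open Real Finset
variable {Ω α β γ δ : Type*} [Fintype Ω] [DecidableEq α] [DecidableEq β] [DecidableEq γ] [DecidableEq δ]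

theorem negMulLog_single_le {ι : Type*} {s : Finset ι} {f : ι → ℝ} (hf : ∀ i ∈ s, 0 ≤ f i)
    {i : ι} (hi : i ∈ s) : -(f i) * Real.log (∑ j ∈ s, f j) ≤ Real.negMulLog (f i) := by
  simp only [Real.negMulLog]
  rcases eq_or_lt_of_le (hf i hi) with h | h
  · rw [← h]; simp
  · have hT : f i ≤ ∑ j ∈ s, f j := Finset.single_le_sum hf hi
    have := Real.log_le_log h hT
    nlinarith

theorem negMulLog_sum_le {ι : Type*} {s : Finset ι} {f : ι → ℝ} (hf : ∀ i ∈ s, 0 ≤ f i) :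
    Real.negMulLog (∑ i ∈ s, f i) ≤ ∑ i ∈ s, Real.negMulLog (f i) := by
  have h1 : Real.negMulLog (∑ i ∈ s, f i) = ∑ i ∈ s, (-(f i) * Real.log (∑ j ∈ s, f j)) := by
    simp only [Real.negMulLog]
    rw [← Finset.sum_neg_distrib, Finset.sum_mul]
  rw [h1]
  exact Finset.sum_le_sum fun i hi => negMulLog_single_le hf hi

theorem negMulLog_sum_lt {ι : Type*} {s : Finset ι} {f : ι → ℝ} (hf : ∀ i ∈ s, 0 ≤ f i)
    {i₀ i₁ : ι} (hi₀ : i₀ ∈ s) (hi₁ : i₁ ∈ s) (hne : i₀ ≠ i₁)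
    (h₀ : 0 < f i₀) (h₁ : 0 < f i₁) :
    Real.negMulLog (∑ i ∈ s, f i) < ∑ i ∈ s, Real.negMulLog (f i) := by
  classical
  have h1 : Real.negMulLog (∑ i ∈ s, f i) = ∑ i ∈ s, (-(f i) * Real.log (∑ j ∈ s, f j)) := by
    simp only [Real.negMulLog]
    rw [← Finset.sum_neg_distrib, Finset.sum_mul]
  rw [h1]
  refine Finset.sum_lt_sum (fun i hi => negMulLog_single_le hf hi) ⟨i₀, hi₀, ?_⟩
  have hT : f i₀ + f i₁ ≤ ∑ j ∈ s, f j := by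
    have : ∑ j ∈ ({i₀, i₁} : Finset ι), f j ≤ ∑ j ∈ s, f j := by
      refine Finset.sum_le_sum_of_subset_of_nonneg ?_ (fun i hi _ => hf i hi)
      intro i hi
      simp only [Finset.mem_insert, Finset.mem_singleton] at hi
      rcases hi with h | h <;> simp [h, hi₀, hi₁]
    rwa [Finset.sum_insert (by simpa using hne), Finset.sum_singleton] at this
  have hlt : f i₀ < ∑ j ∈ s, f j := by linarith
  have := Real.log_lt_log h₀ hlt
  simp only [Real.negMulLog]
  nlinarith

theorem image_pair_subset (A : Ω → α) (B : Ω → β) :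
    Finset.univ.image (fun ω => (A ω, B ω)) ⊆ Finset.univ.image A ×ˢ Finset.univ.image B := by
  intro s hs
  simp only [Finset.mem_image, Finset.mem_univ, true_and] at hs
  obtain ⟨ω, hω⟩ := hs
  rw [← hω]
  simp [Finset.mem_product]

theorem pr_snd (p : Ω → ℝ) (A : Ω → α) (B : Ω → β) (b : β) :
    pr p B b = ∑ a ∈ Finset.univ.image A, pr p (fun ω => (A ω, B ω)) (a, b) := by
  classical
  unfold pr
  rw [← Finset.sum_fiberwise_of_maps_to (s := Finset.univ.filter (fun ω => B ω = b))
    (t := Finset.univ.image A) (g := A) (fun ω _ => Finset.mem_image_of_mem A (Finset.mem_univ ω)) p]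
  refine Finset.sum_congr rfl fun a _ => ?_
  congr 1
  ext ω
  simp only [Finset.mem_filter, Finset.mem_univ, true_and, Prod.mk.injEq] <;> tauto

theorem pr_fst (p : Ω → ℝ) (A : Ω → α) (B : Ω → β) (a : α) :
    pr p A a = ∑ b ∈ Finset.univ.image B, pr p (fun ω => (A ω, B ω)) (a, b) := by
  classical
  unfold pr
  rw [← Finset.sum_fiberwise_of_maps_to (s := Finset.univ.filter (fun ω => A ω = a))
    (t := Finset.univ.image B) (g := B) (fun ω _ => Finset.mem_image_of_mem B (Finset.mem_univ ω)) p]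
  refine Finset.sum_congr rfl fun b _ => ?_
  congr 1
  ext ω
  simp only [Finset.mem_filter, Finset.mem_univ, true_and, Prod.mk.injEq] <;> tauto

theorem ent_pair_comm (p : Ω → ℝ) (A : Ω → α) (B : Ω → β) :
    ent p (fun ω => (A ω, B ω)) = ent p (fun ω => (B ω, A ω)) := by
  have h := ent_comp_inj p (fun ω => (B ω, A ω)) (f := Prod.swap) Prod.swap_injective
  simpa using h

theorem ent_snd_le (p : Ω → ℝ) (hp : ∀ ω, 0 ≤ p ω) (A : Ω → α) (B : Ω → β) :
    ent p B ≤ ent p (fun ω => (A ω, B ω)) := by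
  rw [ent_eq_sum p (fun ω => (A ω, B ω)) (image_pair_subset A B),
    Finset.sum_product_right]
  unfold ent
  refine Finset.sum_le_sum fun b _ => ?_
  rw [pr_snd p A B b]
  exact negMulLog_sum_le fun a _ => pr_nonneg p hp _ _

theorem ent_fst_le (p : Ω → ℝ) (hp : ∀ ω, 0 ≤ p ω) (A : Ω → α) (B : Ω → β) :
    ent p A ≤ ent p (fun ω => (A ω, B ω)) := by
  rw [ent_pair_comm]
  exact ent_snd_le p hp B A

end Helpers2
section Helpers3
open Real Finset
variable {Ω α β γ δ : Type*} [Fintype Ω] [DecidableEq α] [DecidableEq β] [DecidableEq γ] [DecidableEq δ]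

theorem exists_pos_of_pr_ne_zero {p : Ω → ℝ} {X : Ω → α} {a : α} (h : pr p X a ≠ 0) :
    ∃ ω, p ω ≠ 0 ∧ X ω = a := by
  obtain ⟨ω, hω, hpω⟩ := Finset.exists_ne_zero_of_sum_ne_zero h
  simp only [Finset.mem_filter, Finset.mem_univ, true_and] at hω
  exact ⟨ω, hpω, hω⟩

theorem pr_pos {p : Ω → ℝ} (hp : ∀ ω, 0 ≤ p ω) (X : Ω → α) {ω : Ω} (hω : p ω ≠ 0) :
    0 < pr p X (X ω) := by
  have h1 : p ω ≤ pr p X (X ω) := by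
    refine Finset.single_le_sum (fun i _ => hp i) ?_
    simp
  have := lt_of_le_of_ne (hp ω) (Ne.symm hω)
  linarith

theorem exists_pos (p : Ω → ℝ) (hp : IsProb p) : ∃ ω : Ω, p ω ≠ 0 := by
  obtain ⟨ω, _, hω⟩ := Finset.exists_ne_zero_of_sum_ne_zero (s := Finset.univ) (f := p)
    (by rw [hp.2]; exact one_ne_zero)
  exact ⟨ω, hω⟩

theorem cent_eq_zero_iff (p : Ω → ℝ) (hp : IsProb p) (A : Ω → α) (B : Ω → β) :
    cent p A B = 0 ↔ ∀ ω ω', p ω ≠ 0 → p ω' ≠ 0 → B ω = B ω' → A ω = A ω' := by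
  classical
  constructor
  · intro hc ω ω' hω hω' hB
    by_contra hAne
    have hlt : ent p B < ent p (fun ω => (A ω, B ω)) := by
      rw [ent_eq_sum p (fun ω => (A ω, B ω)) (image_pair_subset A B), Finset.sum_product_right]
      unfold ent
      refine Finset.sum_lt_sum (fun b _ => ?_) ⟨B ω, by simp, ?_⟩
      · rw [pr_snd p A B b]
        exact negMulLog_sum_le fun a _ => pr_nonneg p hp.1 _ _
      · rw [pr_snd p A B (B ω)]
        refine negMulLog_sum_lt (fun a _ => pr_nonneg p hp.1 _ _)
          (i₀ := A ω) (i₁ := A ω') (by simp) (by simp) hAne ?_ ?_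
        · exact pr_pos hp.1 (fun ω => (A ω, B ω)) hω
        · have h2 := pr_pos hp.1 (fun ω => (A ω, B ω)) hω'
          rwa [← hB] at h2
    unfold cent at hc
    linarith
  · intro h
    obtain ⟨ω₀, hω₀⟩ := exists_pos p hp
    set φ : β → α := fun b => if hb : ∃ ω, p ω ≠ 0 ∧ B ω = b then A hb.choose else A ω₀ with hφ
    have hae : ∀ ω, p ω ≠ 0 → A ω = φ (B ω) := by
      intro ω hω
      have hex : ∃ ω', p ω' ≠ 0 ∧ B ω' = B ω := ⟨ω, hω, rfl⟩
      rw [hφ]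
      simp only [dif_pos hex]
      exact (h _ ω hex.choose_spec.1 hω hex.choose_spec.2).symm
    have h1 : ent p (fun ω => (A ω, B ω)) = ent p (fun ω => (φ (B ω), B ω)) :=
      ent_congr_ae fun ω hω => by rw [hae ω hω]
    have h2 : ent p (fun ω => (φ (B ω), B ω)) = ent p B :=
      ent_comp_inj p B (f := fun b => (φ b, b)) fun b b' hbb => congrArg Prod.snd hbb
    unfold cent
    rw [h1, h2, sub_self]

end Helpers3
section Helpers4
open Real Finset
variable {Ω α β γ δ : Type*} [Fintype Ω] [DecidableEq α] [DecidableEq β] [DecidableEq γ] [DecidableEq δ]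

theorem sum_pr_one {p : Ω → ℝ} (hp : IsProb p) (W : Ω → α) :
    ∑ w ∈ Finset.univ.image W, pr p W w = 1 := by
  rw [sum_pr p W (Finset.Subset.refl _), hp.2]

theorem indep_fst {p : Ω → ℝ} {X : Ω → α} {Y : Ω → β} {Z : Ω → γ}
    (hind : IndepRV p (fun ω => (X ω, Y ω)) Z) : IndepRV p X Z := by
  intro x z
  have h1 : pr p (fun ω => (X ω, Z ω)) (x, z)
      = ∑ y ∈ Finset.univ.image Y, pr p (fun ω => ((X ω, Z ω), Y ω)) ((x, z), y) :=
    pr_fst p (fun ω => (X ω, Z ω)) Y (x, z)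
  rw [h1]
  have h2 : ∀ y, pr p (fun ω => ((X ω, Z ω), Y ω)) ((x, z), y)
      = pr p (fun ω => ((X ω, Y ω), Z ω)) ((x, y), z) := by
    intro y
    refine pr_fiber_congr fun ω => ?_
    simp only [Prod.mk.injEq]
    tauto
  calc ∑ y ∈ Finset.univ.image Y, pr p (fun ω => ((X ω, Z ω), Y ω)) ((x, z), y)
      = ∑ y ∈ Finset.univ.image Y, pr p (fun ω => (X ω, Y ω)) (x, y) * pr p Z z := by
        refine Finset.sum_congr rfl fun y _ => ?_
        rw [h2 y, hind (x, y) z]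
    _ = pr p X x * pr p Z z := by
        rw [← Finset.sum_mul, ← pr_fst p X Y x]

theorem indep_snd {p : Ω → ℝ} {X : Ω → α} {Y : Ω → β} {Z : Ω → γ}
    (hind : IndepRV p (fun ω => (X ω, Y ω)) Z) : IndepRV p Y Z := by
  refine indep_fst (X := Y) (Y := X) (Z := Z) ?_
  rintro ⟨y, x⟩ z
  show pr p (fun ω => ((Y ω, X ω), Z ω)) ((y, x), z) = pr p (fun ω => (Y ω, X ω)) (y, x) * pr p Z z
  have e1 : pr p (fun ω => ((Y ω, X ω), Z ω)) ((y, x), z)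
      = pr p (fun ω => ((X ω, Y ω), Z ω)) ((x, y), z) := by
    refine pr_fiber_congr fun ω => ?_
    simp only [Prod.mk.injEq]; tauto
  have e2 : pr p (fun ω => (Y ω, X ω)) (y, x) = pr p (fun ω => (X ω, Y ω)) (x, y) := by
    refine pr_fiber_congr fun ω => ?_
    simp only [Prod.mk.injEq]; tauto
  rw [e1, e2, hind (x, y) z]

theorem ent_pair_indep {p : Ω → ℝ} (hp : IsProb p) {A : Ω → α} {B : Ω → β}
    (h : IndepRV p A B) : ent p (fun ω => (A ω, B ω)) = ent p A + ent p B := by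
  rw [ent_eq_sum p (fun ω => (A ω, B ω)) (image_pair_subset A B), Finset.sum_product]
  calc ∑ a ∈ Finset.univ.image A, ∑ b ∈ Finset.univ.image B,
        Real.negMulLog (pr p (fun ω => (A ω, B ω)) (a, b))
      = ∑ a ∈ Finset.univ.image A, ((∑ b ∈ Finset.univ.image B, pr p B b) * Real.negMulLog (pr p A a)
          + pr p A a * ∑ b ∈ Finset.univ.image B, Real.negMulLog (pr p B b)) := by
        refine Finset.sum_congr rfl fun a _ => ?_
        rw [Finset.sum_mul, Finset.mul_sum, ← Finset.sum_add_distrib]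
        refine Finset.sum_congr rfl fun b _ => ?_
        rw [h a b, Real.negMulLog_mul]
    _ = ent p A + ent p B := by
        rw [sum_pr_one hp B]
        simp only [one_mul]
        rw [Finset.sum_add_distrib, ← Finset.sum_mul, sum_pr_one hp A, one_mul]
        rfl

end Helpers4
section Helpers5
open Real Finset
variable {Ω α β γ δ : Type*} [Fintype Ω] [DecidableEq α] [DecidableEq β] [DecidableEq γ] [DecidableEq δ]

/-- conditional distribution given `Z = z`. -/
noncomputable def condZ (p : Ω → ℝ) (Z : Ω → γ) (z : γ) : Ω → ℝ :=
  fun ω => if Z ω = z then p ω / pr p Z z else 0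

theorem pr_condZ (p : Ω → ℝ) (Z : Ω → γ) (z : γ) (A : Ω → α) (a : α) :
    pr (condZ p Z z) A a = pr p (fun ω => (A ω, Z ω)) (a, z) / pr p Z z := by
  classical
  unfold pr condZ
  rw [← Finset.sum_filter, Finset.filter_filter, ← Finset.sum_div]
  congr 2
  ext ω
  simp only [Finset.mem_filter, Finset.mem_univ, true_and, Prod.mk.injEq]

theorem pr_pair_le_snd {p : Ω → ℝ} (hp : ∀ ω, 0 ≤ p ω) (A : Ω → α) (Z : Ω → γ) (a : α) (z : γ) :
    pr p (fun ω => (A ω, Z ω)) (a, z) ≤ pr p Z z := by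
  unfold pr
  refine Finset.sum_le_sum_of_subset_of_nonneg ?_ (fun ω hω _ => hp ω)
  intro ω hω
  simp only [Finset.mem_filter, Finset.mem_univ, true_and, Prod.mk.injEq] at hω ⊢
  exact hω.2

theorem pr_pair_condZ {p : Ω → ℝ} (hp : ∀ ω, 0 ≤ p ω) (A : Ω → α) (Z : Ω → γ) (a : α) (z : γ) :
    pr p (fun ω => (A ω, Z ω)) (a, z) = pr p Z z * pr (condZ p Z z) A a := by
  rw [pr_condZ]
  rcases eq_or_ne (pr p Z z) 0 with h | h
  · rw [h, zero_mul]
    have h1 := pr_pair_le_snd hp A Z a z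
    have h2 := pr_nonneg p hp (fun ω => (A ω, Z ω)) (a, z)
    linarith
  · rw [mul_div_cancel₀ _ h]

theorem condZ_nonneg {p : Ω → ℝ} (hp : ∀ ω, 0 ≤ p ω) (Z : Ω → γ) (z : γ) (ω : Ω) :
    0 ≤ condZ p Z z ω := by
  unfold condZ
  split
  · exact div_nonneg (hp ω) (pr_nonneg p hp Z z)
  · exact le_refl 0

theorem condZ_isProb {p : Ω → ℝ} (hp : IsProb p) (Z : Ω → γ) (z : γ) (hz : pr p Z z ≠ 0) :
    IsProb (condZ p Z z) := by
  refine ⟨condZ_nonneg hp.1 Z z, ?_⟩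
  unfold condZ
  classical
  rw [Finset.sum_ite, Finset.sum_const_zero, add_zero, ← Finset.sum_div]
  rw [show ∑ ω ∈ Finset.univ.filter (fun ω => Z ω = z), p ω = pr p Z z from rfl]
  exact div_self hz

theorem ent_chain {p : Ω → ℝ} (hp : IsProb p) (A : Ω → α) (Z : Ω → γ) :
    ent p (fun ω => (A ω, Z ω)) =
      ent p Z + ∑ z ∈ Finset.univ.image Z, pr p Z z * ent (condZ p Z z) A := by
  rw [ent_eq_sum p (fun ω => (A ω, Z ω)) (image_pair_subset A Z), Finset.sum_product_right]
  have key : ∀ z ∈ Finset.univ.image Z,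
      ∑ a ∈ Finset.univ.image A, Real.negMulLog (pr p (fun ω => (A ω, Z ω)) (a, z))
        = Real.negMulLog (pr p Z z) + pr p Z z * ent (condZ p Z z) A := by
    intro z _
    have h1 : ∀ a, Real.negMulLog (pr p (fun ω => (A ω, Z ω)) (a, z))
        = pr (condZ p Z z) A a * Real.negMulLog (pr p Z z)
          + pr p Z z * Real.negMulLog (pr (condZ p Z z) A a) := by
      intro a
      rw [pr_pair_condZ hp.1 A Z a z, Real.negMulLog_mul]
    simp only [h1]
    rw [Finset.sum_add_distrib, ← Finset.sum_mul, ← Finset.mul_sum]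
    have h2 : (∑ a ∈ Finset.univ.image A, pr (condZ p Z z) A a) * Real.negMulLog (pr p Z z)
        = Real.negMulLog (pr p Z z) := by
      rcases eq_or_ne (pr p Z z) 0 with h | h
      · rw [h, Real.negMulLog_zero, mul_zero]
      · rw [sum_pr_one (condZ_isProb hp Z z h) A, one_mul]
    rw [h2]
    rfl
  rw [Finset.sum_congr rfl key, Finset.sum_add_distrib]
  rfl

end Helpers5
section Helpers6
open Real Finset
variable {Ω α β γ δ : Type*} [Fintype Ω] [DecidableEq α] [DecidableEq β] [DecidableEq γ] [DecidableEq δ]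

theorem comp_indep {p : Ω → ℝ} {X : Ω → α} {Z : Ω → γ} (h : IndepRV p X Z) (φ : α → δ) :
    IndepRV p (fun ω => φ (X ω)) Z := by
  classical
  intro g z
  have e1 : pr p (fun ω => (φ (X ω), Z ω)) (g, z)
      = ∑ x ∈ (Finset.univ.image X).filter (fun x => φ x = g),
          pr p (fun ω => (X ω, Z ω)) (x, z) := by
    unfold pr
    rw [← Finset.sum_fiberwise_of_maps_to
      (s := Finset.univ.filter (fun ω => (φ (X ω), Z ω) = (g, z)))
      (t := (Finset.univ.image X).filter (fun x => φ x = g)) (g := X) ?_ p]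
    · refine Finset.sum_congr rfl fun x hx => ?_
      simp only [Finset.mem_filter] at hx
      congr 1
      ext ω
      simp only [Finset.mem_filter, Finset.mem_univ, true_and, Prod.mk.injEq]
      constructor
      · rintro ⟨⟨h1, h2⟩, h3⟩; exact ⟨h3, h2⟩
      · rintro ⟨h3, h2⟩; exact ⟨⟨by rw [h3, hx.2], h2⟩, h3⟩
    · intro ω hω
      simp only [Finset.mem_filter, Finset.mem_univ, true_and, Prod.mk.injEq] at hω ⊢
      exact ⟨Finset.mem_image_of_mem X (Finset.mem_univ ω), hω.1⟩
  have e2 : pr p (fun ω => φ (X ω)) g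
      = ∑ x ∈ (Finset.univ.image X).filter (fun x => φ x = g), pr p X x :=
    pr_comp p X φ (Finset.Subset.refl _) g
  rw [e1, e2, Finset.sum_mul]
  exact Finset.sum_congr rfl fun x _ => h x z

end Helpers6
/-- If (X,Y) is independent of Z, then mcf((X,Z),(Y,Z)) = (mcf(X,Y), Z):
if `G` is a maximal common function of X and Y, then (G,Z) is a maximal common function
of (X,Z) and (Y,Z); in particular J_GK((X,Z),(Y,Z)) = J_GK(X,Y) + H(Z). -/
theorem mcf_adjoin_indep {Ω α β γ δ : Type*} [Fintype Ω]
    [DecidableEq α] [DecidableEq β] [DecidableEq γ] [DecidableEq δ]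
    (p : Ω → ℝ) (hp : IsProb p)
    (X : Ω → α) (Y : Ω → β) (Z : Ω → γ)
    (hind : IndepRV p (fun ω => (X ω, Y ω)) Z)
    (G : Ω → δ)
    (hG : IsMCF p X Y G) :
    IsMCF p (fun ω => (X ω, Z ω)) (fun ω => (Y ω, Z ω)) (fun ω => (G ω, Z ω)) ∧
    ent p (fun ω => (G ω, Z ω)) = ent p G + ent p Z := by
  classical
  obtain ⟨⟨hGX, hGY⟩, hGmax⟩ := hG
  have hGXf : ∀ ω ω', p ω ≠ 0 → p ω' ≠ 0 → X ω = X ω' → G ω = G ω' :=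
    (cent_eq_zero_iff p hp G X).1 hGX
  have hGYf : ∀ ω ω', p ω ≠ 0 → p ω' ≠ 0 → Y ω = Y ω' → G ω = G ω' :=
    (cent_eq_zero_iff p hp G Y).1 hGY
  have hXZ : IndepRV p X Z := indep_fst hind
  have hYZ : IndepRV p Y Z := indep_snd hind
  -- G is a.s. a function of X
  obtain ⟨ω₀, hω₀⟩ := exists_pos p hp
  set φ : α → δ := fun x => if hx : ∃ ω, p ω ≠ 0 ∧ X ω = x then G hx.choose else G ω₀ with hφdef
  have hφ : ∀ ω, p ω ≠ 0 → G ω = φ (X ω) := by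
    intro ω hω
    have hex : ∃ ω', p ω' ≠ 0 ∧ X ω' = X ω := ⟨ω, hω, rfl⟩
    rw [hφdef]
    simp only [dif_pos hex]
    exact (hGXf _ ω hex.choose_spec.1 hω hex.choose_spec.2).symm
  -- G is independent of Z
  have hGZ : IndepRV p G Z := by
    intro g z
    have e1 : pr p (fun ω => (G ω, Z ω)) (g, z) = pr p (fun ω => (φ (X ω), Z ω)) (g, z) :=
      pr_congr_ae (fun ω hω => by rw [hφ ω hω]) _
    have e2 : pr p G g = pr p (fun ω => φ (X ω)) g := pr_congr_ae (fun ω hω => hφ ω hω) g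
    rw [e1, e2]
    exact comp_indep hXZ φ g z
  have hent : ent p (fun ω => (G ω, Z ω)) = ent p G + ent p Z := ent_pair_indep hp hGZ
  refine ⟨⟨⟨?_, ?_⟩, ?_⟩, hent⟩
  · -- cent p (G,Z) (X,Z) = 0
    rw [cent_eq_zero_iff p hp]
    intro ω ω' hω hω' hB
    simp only [Prod.mk.injEq] at hB ⊢
    exact ⟨hGXf ω ω' hω hω' hB.1, hB.2⟩
  · -- cent p (G,Z) (Y,Z) = 0
    rw [cent_eq_zero_iff p hp]
    intro ω ω' hω hω' hB
    simp only [Prod.mk.injEq] at hB ⊢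
    exact ⟨hGYf ω ω' hω hω' hB.1, hB.2⟩
  · -- maximality
    intro G' hG'
    have hX' : ∀ ω ω', p ω ≠ 0 → p ω' ≠ 0 → X ω = X ω' → Z ω = Z ω' → G' ω = G' ω' := by
      have h := (cent_eq_zero_iff p hp G' (fun ω => (X ω, Z ω))).1 hG'.1
      intro ω ω' hω hω' h1 h2
      exact h ω ω' hω hω' (by simp only [Prod.mk.injEq]; exact ⟨h1, h2⟩)
    have hY' : ∀ ω ω', p ω ≠ 0 → p ω' ≠ 0 → Y ω = Y ω' → Z ω = Z ω' → G' ω = G' ω' := by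
      have h := (cent_eq_zero_iff p hp G' (fun ω => (Y ω, Z ω))).1 hG'.2
      intro ω ω' hω hω' h1 h2
      exact h ω ω' hω hω' (by simp only [Prod.mk.injEq]; exact ⟨h1, h2⟩)
    have step1 : ent p G' ≤ ent p (fun ω => (G' ω, Z ω)) := ent_fst_le p hp.1 G' Z
    have step2 : ent p (fun ω => (G' ω, Z ω)) =
        ent p Z + ∑ z ∈ Finset.univ.image Z, pr p Z z * ent (condZ p Z z) G' :=
      ent_chain hp G' Z
    have step3 : ∀ z ∈ Finset.univ.image Z,
        pr p Z z * ent (condZ p Z z) G' ≤ pr p Z z * ent p G := by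
      intro z _
      rcases eq_or_ne (pr p Z z) 0 with hz | hz
      · rw [hz, zero_mul, zero_mul]
      · refine mul_le_mul_of_nonneg_left ?_ (pr_nonneg p hp.1 Z z)
        -- key bound : ent (condZ p Z z) G' ≤ ent p G
        have hex1 : ∀ ω, p ω ≠ 0 → ∃ ω1, p ω1 ≠ 0 ∧ Z ω1 = z ∧ X ω1 = X ω := by
          intro ω hω
          have hne : pr p (fun ω => (X ω, Z ω)) (X ω, z) ≠ 0 := by
            rw [hXZ (X ω) z]
            exact mul_ne_zero (ne_of_gt (pr_pos hp.1 X hω)) hz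
          obtain ⟨ω1, h1, h2⟩ := exists_pos_of_pr_ne_zero hne
          simp only [Prod.mk.injEq] at h2
          exact ⟨ω1, h1, h2.2, h2.1⟩
        have hex3 : ∀ ω, p ω ≠ 0 → ∃ ω3, p ω3 ≠ 0 ∧ X ω3 = X ω ∧ Y ω3 = Y ω ∧ Z ω3 = z := by
          intro ω hω
          have hne : pr p (fun ω => ((X ω, Y ω), Z ω)) ((X ω, Y ω), z) ≠ 0 := by
            rw [hind (X ω, Y ω) z]
            exact mul_ne_zero (ne_of_gt (pr_pos hp.1 (fun ω => (X ω, Y ω)) hω)) hz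
          obtain ⟨ω3, h1, h2⟩ := exists_pos_of_pr_ne_zero hne
          simp only [Prod.mk.injEq] at h2
          exact ⟨ω3, h1, h2.1.1, h2.1.2, h2.2⟩
        set fz : α → ℕ := fun x =>
          if hx : ∃ ω1, p ω1 ≠ 0 ∧ Z ω1 = z ∧ X ω1 = x then G' hx.choose else 0 with hfzdef
        have hfz : ∀ ω, p ω ≠ 0 → Z ω = z → fz (X ω) = G' ω := by
          intro ω hω hZω
          have hx : ∃ ω1, p ω1 ≠ 0 ∧ Z ω1 = z ∧ X ω1 = X ω := ⟨ω, hω, hZω, rfl⟩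
          rw [hfzdef]
          simp only [dif_pos hx]
          exact hX' _ ω hx.choose_spec.1 hω hx.choose_spec.2.2
            (by rw [hx.choose_spec.2.1, hZω])
        have hfzY : ∀ ω ω', p ω ≠ 0 → p ω' ≠ 0 → Y ω = Y ω' → fz (X ω) = fz (X ω') := by
          intro ω ω' hω hω' hYY
          obtain ⟨ω3, h3p, h3X, h3Y, h3Z⟩ := hex3 ω hω
          obtain ⟨ω3', h3p', h3X', h3Y', h3Z'⟩ := hex3 ω' hω'
          have e1 : fz (X ω) = G' ω3 := by rw [← h3X]; exact hfz ω3 h3p h3Z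
          have e2 : fz (X ω') = G' ω3' := by rw [← h3X']; exact hfz ω3' h3p' h3Z'
          have e3 : G' ω3 = G' ω3' := by
            refine hY' ω3 ω3' h3p h3p' ?_ (by rw [h3Z, h3Z'])
            rw [h3Y, h3Y', hYY]
          rw [e1, e2, e3]
        have hCF' : IsCF p X Y (fun ω => fz (X ω)) := by
          constructor
          · rw [cent_eq_zero_iff p hp]
            intro ω ω' _ _ hXX
            exact congrArg fz hXX
          · rw [cent_eq_zero_iff p hp]
            intro ω ω' hω hω' hYY
            exact hfzY ω ω' hω hω' hYY
        have hle : ent p (fun ω => fz (X ω)) ≤ ent p G := hGmax _ hCF'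
        have e1 : ent (condZ p Z z) G' = ent (condZ p Z z) (fun ω => fz (X ω)) := by
          refine ent_congr_ae fun ω hω => ?_
          have hZω : Z ω = z := by
            by_contra hc
            exact hω (by unfold condZ; rw [if_neg hc])
          have hpω : p ω ≠ 0 := by
            intro hc
            exact hω (by unfold condZ; rw [if_pos hZω, hc, zero_div])
          exact (hfz ω hpω hZω).symm
        have e2 : ent (condZ p Z z) (fun ω => fz (X ω)) = ent p (fun ω => fz (X ω)) := by
          have hprX : ∀ x, pr (condZ p Z z) X x = pr p X x := by
            intro x
            rw [pr_condZ, hXZ x z, mul_div_cancel_right₀ _ hz]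
          unfold ent
          refine Finset.sum_congr rfl fun c _ => ?_
          rw [pr_comp (condZ p Z z) X fz (Finset.Subset.refl _) c,
            pr_comp p X fz (Finset.Subset.refl _) c]
          exact congrArg _ (Finset.sum_congr rfl fun x _ => hprX x)
        rw [e1, e2]
        exact hle
    have step4 : ∑ z ∈ Finset.univ.image Z, pr p Z z * ent p G = ent p G := by
      rw [← Finset.sum_mul, sum_pr_one hp Z, one_mul]
    have := Finset.sum_le_sum step3
    rw [hent]
    rw [step4] at this
    linarith [step1, step2 ▸ step1]
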